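/- Let G be a snark and let e1 and e2 be distinct edges of G. The edge extension G(e1,e2) — obtained by subdividing e1 and e2 each with one new vertex and joining the two new vertices by a new edge — is a snark if and only if the pair {e1,e2} is removable, i.e. G − {e1,e2} is not 3-edge-colourable. -/

import Mathlib

/-- The Klein four-group `Z₂ × Z₂`; Tait colourings use its three nonzero
elements as colours. -/
abbrev Klein : Type := ZMod 2 × ZMod 2

/-- A (cubic) multipole: a finite set of vertices and edges, where each edge has
two ends (`fst` and `snd`), each of which is either incident with a vertex
(`some v`) or free (`none`), the latter being a *semiedge*. -/
structure Multipole where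
  V : Type
  E : Type
  [instVF : Fintype V]
  [instEF : Fintype E]
  [instVD : DecidableEq V]
  [instED : DecidableEq E]
  fst : E → Option V
  snd : E → Option V

attribute [instance] Multipole.instVF Multipole.instEF Multipole.instVD Multipole.instED

namespace Multipole

variable (M : Multipole)

/-- The end of edge `e` on side `b`. -/
def endAt (e : M.E) (b : Bool) : Option M.V := if b then M.fst e else M.snd e

/-- The number of edge ends incident with `v`. -/
def degree (v : M.V) : ℕ :=
  (Finset.univ.filter fun p : M.E × Bool => M.endAt p.1 p.2 = some v).card

/-- Every vertex is incident with exactly three edge ends. -/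
def IsCubic : Prop := ∀ v : M.V, M.degree v = 3

/-- No semiedges: every edge end is incident with a vertex (i.e. `M` is a graph). -/
def Closed : Prop := ∀ (e : M.E) (b : Bool), M.endAt e b ≠ none

/-- Edge `e` joins vertices `x` and `y`. -/
def Joins (e : M.E) (x y : M.V) : Prop :=
  (M.fst e = some x ∧ M.snd e = some y) ∨ (M.fst e = some y ∧ M.snd e = some x)

def Adj (x y : M.V) : Prop := ∃ e : M.E, M.Joins e x y

def Conn : Prop := ∀ x y : M.V, Relation.ReflTransGen M.Adj x y

/-- A proper 3-edge-colouring (Tait colouring): every edge gets a nonzero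
element of the Klein group and the edge ends meeting at any vertex get
pairwise distinct colours. -/
def Proper (φ : M.E → Klein) : Prop :=
  (∀ e, φ e ≠ 0) ∧
  ∀ (v : M.V) (p q : M.E × Bool),
    M.endAt p.1 p.2 = some v → M.endAt q.1 q.2 = some v → p ≠ q → φ p.1 ≠ φ q.1

def Colourable : Prop := ∃ φ : M.E → Klein, M.Proper φ

/-- A colouring viewed as a nowhere-zero `Z₂ × Z₂`-flow: nonzero colours whose
sum at each vertex is `0`.  At 3-valent vertices this is equivalent to
properness; at a 2-valent vertex it forces the two incident edges to receive
equal colours, which is exactly the condition for the colouring to descend to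
the cubic graph obtained by suppressing that vertex. -/
def ProperFlow (φ : M.E → Klein) : Prop :=
  (∀ e, φ e ≠ 0) ∧
  ∀ v : M.V, (∑ p : M.E × Bool, if M.endAt p.1 p.2 = some v then φ p.1 else 0) = 0

def FlowColourable : Prop := ∃ φ : M.E → Klein, M.ProperFlow φ

/-- A snark: a connected cubic graph without a proper 3-edge-colouring. -/
def IsSnark : Prop := M.IsCubic ∧ M.Closed ∧ M.Conn ∧ ¬ M.Colourable

/-- The number of semiedges of `M`. -/
def semiendCount : ℕ :=
  (Finset.univ.filter fun p : M.E × Bool => M.endAt p.1 p.2 = none).card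

/-- The number of semiedges of `M` whose edge is coloured `c`. -/
def semiendColourCount (φ : M.E → Klein) (c : Klein) : ℕ :=
  (Finset.univ.filter fun p : M.E × Bool => M.endAt p.1 p.2 = none ∧ φ p.1 = c).card

/-- The sum of the colours on the semiedges of `M`. -/
def semiSum (φ : M.E → Klein) : Klein :=
  ∑ p : M.E × Bool, if M.endAt p.1 p.2 = none then φ p.1 else 0

/-- Delete a set of vertices, retaining dangling edges; edges with no end
outside `S` are discarded. -/
noncomputable def delVerts (S : Finset M.V) : Multipole := by
  classical
  exact
    { V := {x : M.V // x ∉ S}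
      E := {e : M.E // ∃ (b : Bool) (x : M.V), M.endAt e b = some x ∧ x ∉ S}
      fst := fun e => match M.fst e.1 with
        | none => none
        | some x => if h : x ∈ S then none else some ⟨x, h⟩
      snd := fun e => match M.snd e.1 with
        | none => none
        | some x => if h : x ∈ S then none else some ⟨x, h⟩ }

/-- The flow through the connector of `M.delVerts S` consisting of the
semiedges formerly incident with the deleted vertex `u`. -/
noncomputable def connFlow (S : Finset M.V) (φ : (M.delVerts S).E → Klein) (u : M.V) : Klein :=
  ∑ e : (M.delVerts S).E,
    ((if M.fst e.1 = some u then φ e else 0) + (if M.snd e.1 = some u then φ e else 0))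

/-- Delete a single edge (keeping its end vertices). -/
def delEdge (e0 : M.E) : Multipole where
  V := M.V
  E := {e : M.E // e ≠ e0}
  fst := fun e => M.fst e.1
  snd := fun e => M.snd e.1

/-- Delete a pair of edges (keeping their end vertices). -/
def delPair (e1 e2 : M.E) : Multipole where
  V := M.V
  E := {e : M.E // e ≠ e1 ∧ e ≠ e2}
  fst := fun e => M.fst e.1
  snd := fun e => M.snd e.1

/-- Sever the edge `e0`: replace it by two dangling edges. -/
def sever (e0 : M.E) : Multipole where
  V := M.V
  E := M.E ⊕ Unit
  fst := fun e => match e with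
    | .inl f => M.fst f
    | .inr _ => M.snd e0
  snd := fun e => match e with
    | .inl f => if f = e0 then none else M.snd f
    | .inr _ => none

/-- The I-extension `G(e₁,e₂)`: subdivide `e₁` and `e₂` each with a new vertex
and join the two new vertices by a new edge. -/
def extend (e1 e2 : M.E) : Multipole where
  V := M.V ⊕ Fin 2
  E := M.E ⊕ Fin 3
  fst := fun e => match e with
    | .inl f => (M.fst f).map Sum.inl
    | .inr i => if i = 0 then some (Sum.inr 0)
        else if i = 1 then some (Sum.inr 1) else some (Sum.inr 0)
  snd := fun e => match e with
    | .inl f => if f = e1 then some (Sum.inr 0)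
        else if f = e2 then some (Sum.inr 1) else (M.snd f).map Sum.inl
    | .inr i => if i = 0 then (M.snd e1).map Sum.inl
        else if i = 1 then (M.snd e2).map Sum.inl else some (Sum.inr 1)

/-- A bicritical snark: a snark in which the removal of any two distinct
vertices leaves a 3-edge-colourable multipole. -/
def Bicritical : Prop :=
  M.IsSnark ∧ ∀ x y : M.V, x ≠ y → (M.delVerts {x, y}).Colourable

end Multipole

section ExtensionAux
open Finset

-- Klein facts
lemma klein_add_self : ∀ x : Klein, x + x = 0 := by decide
lemma klein_add_eq_zero_iff : ∀ a b : Klein, a + b = 0 ↔ a = b := by decide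
lemma klein_nz_card : (Finset.univ.filter (· ≠ (0:Klein))).card = 3 := by decide
lemma klein_nz_sum : (∑ x ∈ Finset.univ.filter (· ≠ (0:Klein)), x) = 0 := by decide
lemma klein_triple : ∀ a b k : Klein, a ≠ 0 → b ≠ 0 → a + b = k → k ≠ 0 →
    a ≠ b ∧ a ≠ k ∧ b ≠ k := by decide

lemma klein_sum3 {α : Type*} [DecidableEq α] (s : Finset α) (f : α → Klein)
    (hc : s.card = 3) (h0 : ∀ a ∈ s, f a ≠ 0)
    (hinj : ∀ a ∈ s, ∀ b ∈ s, a ≠ b → f a ≠ f b) : ∑ a ∈ s, f a = 0 := by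
  have hinj' : ∀ a ∈ s, ∀ b ∈ s, f a = f b → a = b := by
    intro a ha b hb h; by_contra hne; exact hinj a ha b hb hne h
  have himg : s.image f = Finset.univ.filter (· ≠ (0:Klein)) := by
    apply Finset.eq_of_subset_of_card_le
    · intro x hx
      simp only [Finset.mem_image] at hx
      obtain ⟨a, ha, rfl⟩ := hx
      simp [h0 a ha]
    · rw [Finset.card_image_of_injOn hinj', hc, klein_nz_card]
  have := Finset.sum_image (f := fun x : Klein => x) (g := f) hinj'
  rw [himg] at this
  rw [← this]; exact klein_nz_sum

namespace Multipole

lemma endAt_true (M : Multipole) (e : M.E) : M.endAt e true = M.fst e := rfl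
lemma endAt_false (M : Multipole) (e : M.E) : M.endAt e false = M.snd e := rfl

lemma delPair_endAt (G : Multipole) (e1 e2 : G.E) (e : (G.delPair e1 e2).E) (b : Bool) :
    (G.delPair e1 e2).endAt e b = G.endAt e.1 b := by cases b <;> rfl

lemma extend_fst_inl (G : Multipole) (e1 e2 : G.E) (f : G.E) :
    (G.extend e1 e2).fst (Sum.inl f) = (G.fst f).map Sum.inl := rfl
lemma extend_snd_inl (G : Multipole) (e1 e2 : G.E) (f : G.E) :
    (G.extend e1 e2).snd (Sum.inl f) = if f = e1 then some (Sum.inr 0)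
      else if f = e2 then some (Sum.inr 1) else (G.snd f).map Sum.inl := rfl
lemma extend_fst_inr (G : Multipole) (e1 e2 : G.E) (i : Fin 3) :
    (G.extend e1 e2).fst (Sum.inr i) = if i = 0 then some (Sum.inr 0)
      else if i = 1 then some (Sum.inr 1) else some (Sum.inr 0) := rfl
lemma extend_snd_inr (G : Multipole) (e1 e2 : G.E) (i : Fin 3) :
    (G.extend e1 e2).snd (Sum.inr i) = if i = 0 then (G.snd e1).map Sum.inl
      else if i = 1 then (G.snd e2).map Sum.inl else some (Sum.inr 1) := rfl

end Multipole
end ExtensionAux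
section T
open Finset
namespace Multipole

lemma fin2_eq (w : Fin 2) : w = 0 ∨ w = 1 := by
  fin_cases w
  · exact Or.inl rfl
  · exact Or.inr rfl

lemma fin3_eq (k : Fin 3) : k = 0 ∨ k = 1 ∨ k = 2 := by
  fin_cases k
  · exact Or.inl rfl
  · exact Or.inr (Or.inl rfl)
  · exact Or.inr (Or.inr rfl)

lemma map_inl_eq_some_inl (G : Multipole) (o : Option G.V) (x : G.V) :
    o.map (Sum.inl : G.V → G.V ⊕ Fin 2) = some (Sum.inl x) ↔ o = some x := by
  cases o <;> simp

lemma map_inl_ne_some_inr (G : Multipole) (o : Option G.V) (w : Fin 2) :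
    o.map (Sum.inl : G.V → G.V ⊕ Fin 2) ≠ some (Sum.inr w) := by
  cases o <;> simp

/-- Characterisation of the edge ends of the extension incident with `Sum.inl v`. -/
lemma extend_end_inl (G : Multipole) (e1 e2 : G.E) (p : (G.E ⊕ Fin 3) × Bool) (v : G.V) :
    (G.extend e1 e2).endAt p.1 p.2 = some (Sum.inl v) ↔
      ((∃ f, p = (Sum.inl f, true) ∧ G.fst f = some v) ∨
       (∃ f, p = (Sum.inl f, false) ∧ f ≠ e1 ∧ f ≠ e2 ∧ G.snd f = some v) ∨
       (p = (Sum.inr 0, false) ∧ G.snd e1 = some v) ∨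
       (p = (Sum.inr 1, false) ∧ G.snd e2 = some v)) := by
  obtain ⟨(f | k), b⟩ := p
  · cases b
    · erw [endAt_false, extend_snd_inl]
      by_cases h1 : f = e1
      · subst h1; simp [Multipole.extend]
      · by_cases h2 : f = e2
        · subst h2; simp [Multipole.extend, h1]
        · simp [Multipole.extend, h1, h2, map_inl_eq_some_inl]
    · erw [endAt_true, extend_fst_inl]
      simp [Multipole.extend, map_inl_eq_some_inl]
  · obtain rfl | rfl | rfl := fin3_eq k
    · cases b
      · erw [endAt_false, extend_snd_inr]
        simp [Multipole.extend, map_inl_eq_some_inl]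
      · erw [endAt_true, extend_fst_inr]
        simp [Multipole.extend]
    · cases b
      · erw [endAt_false, extend_snd_inr]
        simp [Multipole.extend, map_inl_eq_some_inl]
      · erw [endAt_true, extend_fst_inr]
        simp [Multipole.extend]
    · cases b
      · erw [endAt_false, extend_snd_inr]
        simp [Multipole.extend]
      · erw [endAt_true, extend_fst_inr]
        simp [Multipole.extend]

end Multipole
end T

section ExtensionAux2
open Finset
namespace Multipole

lemma exists_assignment (G : Multipole) (hcub : G.IsCubic) (hcl : G.Closed)
    (e1 e2 : G.E) (hcol : (G.delPair e1 e2).Colourable) :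
    ∃ A : G.E × Bool → Klein, (∀ p, A p ≠ 0) ∧
      (∀ (v : G.V) (p q : G.E × Bool), G.endAt p.1 p.2 = some v →
        G.endAt q.1 q.2 = some v → p ≠ q → A p ≠ A q) ∧
      (∀ f b, f ≠ e1 → f ≠ e2 → A (f, b) = A (f, true)) := by
  classical
  obtain ⟨φ, hφ0, hφinj⟩ := hcol
  let φh : G.E × Bool → Klein := fun p =>
    if h : p.1 ≠ e1 ∧ p.1 ≠ e2 then φ ⟨p.1, h⟩ else 0
  let Sv : G.V → Finset (G.E × Bool) := fun v =>
    univ.filter fun p => G.endAt p.1 p.2 = some v ∧ (p.1 = e1 ∨ p.1 = e2)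
  let Fv : G.V → Finset (G.E × Bool) := fun v =>
    univ.filter fun p => G.endAt p.1 p.2 = some v ∧ ¬(p.1 = e1 ∨ p.1 = e2)
  let avail : G.V → Finset Klein := fun v =>
    (univ.filter (· ≠ (0:Klein))) \ (Fv v).image φh
  have hφhval : ∀ (p : G.E × Bool) (h : p.1 ≠ e1 ∧ p.1 ≠ e2), φh p = φ ⟨p.1, h⟩ := by
    intro p h; simp only [φh, dif_pos h]
  have hφh0 : ∀ (p : G.E × Bool), p.1 ≠ e1 → p.1 ≠ e2 → φh p ≠ 0 := by
    intro p h1 h2; rw [hφhval p ⟨h1, h2⟩]; exact hφ0 _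
  have hinjF : ∀ v, ∀ p ∈ Fv v, ∀ q ∈ Fv v, φh p = φh q → p = q := by
    intro v p hp q hq h
    simp only [Fv, mem_filter, mem_univ, true_and, not_or] at hp hq
    obtain ⟨hpv, hp1, hp2⟩ := hp
    obtain ⟨hqv, hq1, hq2⟩ := hq
    by_contra hne
    have hne' : ((⟨p.1, hp1, hp2⟩ : {e : G.E // e ≠ e1 ∧ e ≠ e2}), p.2) ≠
        ((⟨q.1, hq1, hq2⟩ : {e : G.E // e ≠ e1 ∧ e ≠ e2}), q.2) := by
      intro hEq
      apply hne
      exact congrArg (fun r : ({e : G.E // e ≠ e1 ∧ e ≠ e2} × Bool) => (r.1.1, r.2)) hEq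
    have := hφinj v _ _ (by rw [delPair_endAt]; exact hpv) (by rw [delPair_endAt]; exact hqv) hne'
    rw [hφhval p ⟨hp1, hp2⟩, hφhval q ⟨hq1, hq2⟩] at h
    exact this h
  have hsub : ∀ v, (Fv v).image φh ⊆ univ.filter (· ≠ (0:Klein)) := by
    intro v x hx
    simp only [mem_image] at hx
    obtain ⟨p, hp, rfl⟩ := hx
    simp only [Fv, mem_filter, mem_univ, true_and, not_or] at hp
    simp [hφh0 p hp.2.1 hp.2.2]
  have hcard3 : ∀ v, (Sv v).card + (Fv v).card = 3 := by
    intro v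
    have h1 : Sv v = (univ.filter fun p : G.E × Bool => G.endAt p.1 p.2 = some v).filter
        (fun p => p.1 = e1 ∨ p.1 = e2) := by
      simp only [Sv, filter_filter]
    have h2 : Fv v = (univ.filter fun p : G.E × Bool => G.endAt p.1 p.2 = some v).filter
        (fun p => ¬(p.1 = e1 ∨ p.1 = e2)) := by
      simp only [Fv, filter_filter]
    rw [h1, h2, Finset.card_filter_add_card_filter_not]
    exact hcub v
  have hcards : ∀ v, (Sv v).card = (avail v).card := by
    intro v
    have h1 : ((Fv v).image φh).card = (Fv v).card :=
      card_image_of_injOn (fun p hp q hq => hinjF v p hp q hq)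
    have h2 : (avail v).card = 3 - (Fv v).card := by
      simp only [avail]
      rw [card_sdiff_of_subset (hsub v), klein_nz_card, h1]
    have h3 := hcard3 v
    omega
  have hne : ∀ p : G.E × Bool, (G.endAt p.1 p.2).isSome := fun p =>
    Option.ne_none_iff_isSome.mp (hcl p.1 p.2)
  let vtx : G.E × Bool → G.V := fun p => (G.endAt p.1 p.2).get (hne p)
  have hvtx : ∀ p, G.endAt p.1 p.2 = some (vtx p) := fun p => (Option.some_get (hne p)).symm
  let g : ∀ v : G.V, ((Sv v : Finset (G.E × Bool)) : Type) ≃ ((avail v : Finset Klein) : Type) :=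
    fun v => Finset.equivOfCardEq (hcards v)
  have hmem : ∀ (p : G.E × Bool) (v : G.V), G.endAt p.1 p.2 = some v →
      (p.1 = e1 ∨ p.1 = e2) → p ∈ Sv v := by
    intro p v hv hp; simp [Sv, hv, hp]
  let A : G.E × Bool → Klein := fun p =>
    if hp : p.1 = e1 ∨ p.1 = e2 then ((g (vtx p)) ⟨p, hmem p (vtx p) (hvtx p) hp⟩ : Klein)
    else φh p
  have hgA : ∀ (p : G.E × Bool) (hp : p.1 = e1 ∨ p.1 = e2) (v : G.V)
      (hv : G.endAt p.1 p.2 = some v),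
      A p = ((g v) ⟨p, hmem p v hv hp⟩ : Klein) := by
    intro p hp v hv
    have hvp : vtx p = v := Option.some.inj ((hvtx p).symm.trans hv)
    subst hvp
    exact dif_pos hp
  have hAn : ∀ (p : G.E × Bool), ¬(p.1 = e1 ∨ p.1 = e2) → A p = φh p := by
    intro p hp; exact dif_neg hp
  have hAavail : ∀ (p : G.E × Bool) (hp : p.1 = e1 ∨ p.1 = e2) (v : G.V)
      (hv : G.endAt p.1 p.2 = some v), A p ∈ avail v := by
    intro p hp v hv
    rw [hgA p hp v hv]
    exact ((g v) ⟨p, hmem p v hv hp⟩).2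
  refine ⟨A, ?_, ?_, ?_⟩
  · intro p
    by_cases hp : p.1 = e1 ∨ p.1 = e2
    · have := hAavail p hp (vtx p) (hvtx p)
      simp only [avail, mem_sdiff, mem_filter, mem_univ, true_and] at this
      exact this.1
    · rw [hAn p hp]
      push_neg at hp
      exact hφh0 p hp.1 hp.2
  · intro v p q hpv hqv hnepq
    by_cases hp : p.1 = e1 ∨ p.1 = e2 <;> by_cases hq : q.1 = e1 ∨ q.1 = e2
    · rw [hgA p hp v hpv, hgA q hq v hqv]
      intro hEq
      have := (g v).injective (Subtype.ext hEq)
      exact hnepq (congrArg Subtype.val this)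
    · have h1 := hAavail p hp v hpv
      have h2 : A q ∈ (Fv v).image φh := by
        rw [hAn q hq]
        exact mem_image_of_mem φh (by simp only [Fv, mem_filter, mem_univ, true_and]; exact ⟨hqv, hq⟩)
      simp only [avail, mem_sdiff] at h1
      intro hEq; rw [hEq] at h1; exact h1.2 h2
    · have h1 := hAavail q hq v hqv
      have h2 : A p ∈ (Fv v).image φh := by
        rw [hAn p hp]
        exact mem_image_of_mem φh (by simp only [Fv, mem_filter, mem_univ, true_and]; exact ⟨hpv, hp⟩)
      simp only [avail, mem_sdiff] at h1
      intro hEq; rw [← hEq] at h1; exact h1.2 h2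
    · rw [hAn p hp, hAn q hq]
      intro hEq
      exact hnepq (hinjF v p (by simp only [Fv, mem_filter, mem_univ, true_and]; exact ⟨hpv, hp⟩) q (by simp only [Fv, mem_filter, mem_univ, true_and]; exact ⟨hqv, hq⟩) hEq)
  · intro f b h1 h2
    have hnf : ¬((f, b).1 = e1 ∨ (f, b).1 = e2) := by simp [h1, h2]
    have hnt : ¬((f, true).1 = e1 ∨ (f, true).1 = e2) := by simp [h1, h2]
    rw [hAn _ hnf, hAn _ hnt]

end Multipole
end ExtensionAux2

section ExtensionAux3
open Finset
namespace Multipole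

lemma assignment_sum (G : Multipole) (hcub : G.IsCubic) (hcl : G.Closed)
    (A : G.E × Bool → Klein) (h0 : ∀ p, A p ≠ 0)
    (hinj : ∀ (v : G.V) (p q : G.E × Bool), G.endAt p.1 p.2 = some v →
      G.endAt q.1 q.2 = some v → p ≠ q → A p ≠ A q) :
    ∑ p : G.E × Bool, A p = 0 := by
  classical
  have hne : ∀ p : G.E × Bool, (G.endAt p.1 p.2).isSome := fun p =>
    Option.ne_none_iff_isSome.mp (hcl p.1 p.2)
  let vtx : G.E × Bool → G.V := fun p => (G.endAt p.1 p.2).get (hne p)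
  have hvtx : ∀ p, G.endAt p.1 p.2 = some (vtx p) := fun p => (Option.some_get (hne p)).symm
  rw [← Finset.sum_fiberwise univ vtx A]
  apply Finset.sum_eq_zero
  intro v _
  have hfib : (univ.filter fun p : G.E × Bool => vtx p = v)
      = univ.filter fun p : G.E × Bool => G.endAt p.1 p.2 = some v := by
    ext p
    simp only [mem_filter, mem_univ, true_and]
    constructor
    · rintro rfl; exact hvtx p
    · intro h; exact Option.some.inj ((hvtx p).symm.trans h)
  rw [hfib]
  apply klein_sum3 _ _ (hcub v)
  · intro p _; exact h0 p
  · intro p hp q hq hpq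
    simp only [mem_filter, mem_univ, true_and] at hp hq
    exact hinj v p q hp hq hpq

lemma assignment_split (G : Multipole) (e1 e2 : G.E) (h12 : e1 ≠ e2)
    (A : G.E × Bool → Klein)
    (hsame : ∀ f b, f ≠ e1 → f ≠ e2 → A (f, b) = A (f, true)) :
    ∑ p : G.E × Bool, A p =
      (A (e1, true) + A (e1, false)) + (A (e2, true) + A (e2, false)) := by
  classical
  have hsplit := Finset.sum_sdiff (f := fun e : G.E => ∑ b : Bool, A (e, b))
    (Finset.subset_univ ({e1, e2} : Finset G.E))
  have hz : ∑ e ∈ univ \ ({e1, e2} : Finset G.E), (∑ b : Bool, A (e, b)) = 0 := by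
    apply Finset.sum_eq_zero
    intro e he
    simp only [mem_sdiff, mem_univ, true_and, mem_insert, mem_singleton, not_or] at he
    rw [Fintype.sum_bool, hsame e false he.1 he.2]
    exact klein_add_self _
  have hp : ∑ e ∈ ({e1, e2} : Finset G.E), (∑ b : Bool, A (e, b)) =
      (A (e1, true) + A (e1, false)) + (A (e2, true) + A (e2, false)) := by
    rw [Finset.sum_pair h12, Fintype.sum_bool, Fintype.sum_bool]
  rw [Fintype.sum_prod_type, ← hsplit, hz, zero_add, hp]

end Multipole
end ExtensionAux3

section T2
open Finset
namespace Multipole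

/-- Ends at the new vertex `Sum.inr 0`. -/
lemma extend_end_inr0 (G : Multipole) (e1 e2 : G.E)
    (p : (G.E ⊕ Fin 3) × Bool) :
    (G.extend e1 e2).endAt p.1 p.2 = some (Sum.inr 0) ↔
      (p = (Sum.inl e1, false) ∨ p = (Sum.inr 0, true) ∨ p = (Sum.inr 2, true)) := by
  obtain ⟨(f | k), b⟩ := p
  · cases b
    · erw [endAt_false, extend_snd_inl]
      by_cases h1 : f = e1
      · subst h1; simp [Multipole.extend]
      · by_cases h2 : f = e2
        · subst h2; simp [Multipole.extend, h1]
        · simp [Multipole.extend, h1, h2, map_inl_ne_some_inr]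
    · erw [endAt_true, extend_fst_inl]
      simp [Multipole.extend, map_inl_ne_some_inr]
  · obtain rfl | rfl | rfl := fin3_eq k
    · cases b
      · erw [endAt_false, extend_snd_inr]; simp [Multipole.extend, map_inl_ne_some_inr]
      · erw [endAt_true, extend_fst_inr]; simp [Multipole.extend]
    · cases b
      · erw [endAt_false, extend_snd_inr]; simp [Multipole.extend, map_inl_ne_some_inr]
      · erw [endAt_true, extend_fst_inr]; simp [Multipole.extend]
    · cases b
      · erw [endAt_false, extend_snd_inr]; simp [Multipole.extend]
      · erw [endAt_true, extend_fst_inr]; simp [Multipole.extend]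

/-- Ends at the new vertex `Sum.inr 1`. -/
lemma extend_end_inr1 (G : Multipole) (e1 e2 : G.E) (h12 : e1 ≠ e2)
    (p : (G.E ⊕ Fin 3) × Bool) :
    (G.extend e1 e2).endAt p.1 p.2 = some (Sum.inr 1) ↔
      (p = (Sum.inl e2, false) ∨ p = (Sum.inr 1, true) ∨ p = (Sum.inr 2, false)) := by
  obtain ⟨(f | k), b⟩ := p
  · cases b
    · erw [endAt_false, extend_snd_inl]
      by_cases h1 : f = e1
      · subst h1; simp [Multipole.extend, h12]
      · by_cases h2 : f = e2
        · subst h2; simp [Multipole.extend, h1]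
        · simp [Multipole.extend, h1, h2, map_inl_ne_some_inr]
    · erw [endAt_true, extend_fst_inl]
      simp [Multipole.extend, map_inl_ne_some_inr]
  · obtain rfl | rfl | rfl := fin3_eq k
    · cases b
      · erw [endAt_false, extend_snd_inr]; simp [Multipole.extend, map_inl_ne_some_inr]
      · erw [endAt_true, extend_fst_inr]; simp [Multipole.extend]
    · cases b
      · erw [endAt_false, extend_snd_inr]; simp [Multipole.extend, map_inl_ne_some_inr]
      · erw [endAt_true, extend_fst_inr]; simp [Multipole.extend]
    · cases b
      · erw [endAt_false, extend_snd_inr]; simp [Multipole.extend]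
      · erw [endAt_true, extend_fst_inr]; simp [Multipole.extend]

end Multipole
end T2

section T3
open Finset
namespace Multipole

lemma degree_def (M : Multipole) (v : M.V) : M.degree v =
    (Finset.univ.filter fun p : M.E × Bool => M.endAt p.1 p.2 = some v).card := rfl

lemma extend_degree_inl (G : Multipole) (e1 e2 : G.E) (h12 : e1 ≠ e2)
    (v : G.V) : (G.extend e1 e2).degree (Sum.inl v) = G.degree v := by
  erw [degree_def, degree_def]
  apply Finset.card_nbij'
    (i := fun p : (G.E ⊕ Fin 3) × Bool => match p.1 with
      | Sum.inl f => (f, p.2)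
      | Sum.inr k => if k = 0 then (e1, false) else (e2, false))
    (j := fun q : G.E × Bool =>
      if q.2 = true then (Sum.inl q.1, true)
      else if q.1 = e1 then (Sum.inr 0, false)
      else if q.1 = e2 then (Sum.inr 1, false)
      else (Sum.inl q.1, false))
  · intro p hp
    simp only [mem_coe, mem_filter, mem_univ, true_and] at hp ⊢
    replace hp := (Finset.mem_filter.mp (Finset.mem_coe.mp hp)).2
    erw [extend_end_inl] at hp
    rcases hp with ⟨f, rfl, hf⟩ | ⟨f, rfl, h1, h2, hf⟩ | ⟨rfl, hf⟩ | ⟨rfl, hf⟩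
    · show G.endAt f true = some v
      rw [endAt_true]; exact hf
    · show G.endAt f false = some v
      rw [endAt_false]; exact hf
    · show G.endAt e1 false = some v
      rw [endAt_false]; exact hf
    · show G.endAt e2 false = some v
      rw [endAt_false]; exact hf
  · rintro ⟨f, b⟩ hq
    simp only [mem_coe, mem_filter, mem_univ, true_and] at hq ⊢
    refine Finset.mem_coe.mpr (Finset.mem_filter.mpr ⟨Finset.mem_univ _, ?_⟩)
    erw [extend_end_inl]
    cases b
    · rw [endAt_false] at hq
      by_cases h1 : f = e1
      · subst h1
        refine Or.inr (Or.inr (Or.inl ⟨?_, hq⟩))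
        simp
      · by_cases h2 : f = e2
        · subst h2
          refine Or.inr (Or.inr (Or.inr ⟨?_, hq⟩))
          simp [h1]
        · refine Or.inr (Or.inl ⟨f, ?_, h1, h2, hq⟩)
          simp [h1, h2]
    · rw [endAt_true] at hq
      exact Or.inl ⟨f, rfl, hq⟩
  · intro p hp
    replace hp := (Finset.mem_filter.mp (Finset.mem_coe.mp hp)).2
    erw [extend_end_inl] at hp
    rcases hp with ⟨f, rfl, hf⟩ | ⟨f, rfl, h1, h2, hf⟩ | ⟨rfl, hf⟩ | ⟨rfl, hf⟩
    · rfl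
    · simp [h1, h2]
    · simp
    · simp [Ne.symm h12]
  · rintro ⟨f, b⟩ hq
    simp only [mem_coe, mem_filter, mem_univ, true_and] at hq
    cases b
    · by_cases h1 : f = e1
      · subst h1; simp
      · by_cases h2 : f = e2
        · subst h2; simp [h1]
        · simp [h1, h2]
    · rfl

lemma extend_degree_inr0 (G : Multipole) (e1 e2 : G.E) :
    (G.extend e1 e2).degree (Sum.inr 0) = 3 := by
  erw [degree_def]
  apply Finset.card_eq_three.mpr
  refine ⟨((Sum.inl e1 : G.E ⊕ Fin 3), false), ((Sum.inr 0 : G.E ⊕ Fin 3), true),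
    ((Sum.inr 2 : G.E ⊕ Fin 3), true), by simp [Multipole.extend], by simp [Multipole.extend],
    (by simp [Fin.ext_iff] :
      ((Sum.inr 0 : G.E ⊕ Fin 3), true) ≠ ((Sum.inr 2 : G.E ⊕ Fin 3), true)), ?_⟩
  ext p
  simp only [mem_filter, mem_univ, true_and, mem_insert, mem_singleton]
  exact extend_end_inr0 G e1 e2 p

lemma extend_degree_inr1 (G : Multipole) (e1 e2 : G.E) (h12 : e1 ≠ e2) :
    (G.extend e1 e2).degree (Sum.inr 1) = 3 := by
  erw [degree_def]
  apply Finset.card_eq_three.mpr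
  refine ⟨((Sum.inl e2 : G.E ⊕ Fin 3), false), ((Sum.inr 1 : G.E ⊕ Fin 3), true),
    ((Sum.inr 2 : G.E ⊕ Fin 3), false), by simp [Multipole.extend], by simp [Multipole.extend],
    (by simp [Fin.ext_iff] :
      ((Sum.inr 1 : G.E ⊕ Fin 3), true) ≠ ((Sum.inr 2 : G.E ⊕ Fin 3), false)), ?_⟩
  ext p
  simp only [mem_filter, mem_univ, true_and, mem_insert, mem_singleton]
  exact extend_end_inr1 G e1 e2 h12 p

lemma extend_cubic (G : Multipole) (hcub : G.IsCubic) (e1 e2 : G.E) (h12 : e1 ≠ e2) :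
    (G.extend e1 e2).IsCubic := by
  rintro (x | w)
  · rw [extend_degree_inl G e1 e2 h12 x]; exact hcub x
  · obtain rfl | rfl := fin2_eq w
    · exact extend_degree_inr0 G e1 e2
    · exact extend_degree_inr1 G e1 e2 h12
end Multipole
end T3

section T4
open Finset
namespace Multipole

lemma extend_closed (G : Multipole) (hcl : G.Closed) (e1 e2 : G.E) :
    (G.extend e1 e2).Closed := by
  have hf : ∀ f, G.fst f ≠ none := fun f => hcl f true
  have hs : ∀ f, G.snd f ≠ none := fun f => hcl f false
  rintro (f | i) b <;> cases b
  · erw [endAt_false, extend_snd_inl]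
    split_ifs
    · simp [Multipole.extend]
    · simp [Multipole.extend]
    · cases hGs : G.snd f with
      | none => exact absurd hGs (hs f)
      | some x => simp [Multipole.extend]
  · erw [endAt_true, extend_fst_inl]
    cases hGf : G.fst f with
    | none => exact absurd hGf (hf f)
    | some x => simp [Multipole.extend]
  · erw [endAt_false, extend_snd_inr]
    split_ifs
    · cases hGs : G.snd e1 with
      | none => exact absurd hGs (hs e1)
      | some x => simp [Multipole.extend]
    · cases hGs : G.snd e2 with
      | none => exact absurd hGs (hs e2)
      | some x => simp [Multipole.extend]
    · simp [Multipole.extend]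
  · erw [endAt_true, extend_fst_inr]
    split_ifs <;> simp [Multipole.extend]

lemma extend_conn (G : Multipole) (hcl : G.Closed) (hconn : G.Conn) (e1 e2 : G.E)
    (h12 : e1 ≠ e2) : (G.extend e1 e2).Conn := by
  have hsym : Symmetric (G.extend e1 e2).Adj := by
    rintro x y ⟨e, he⟩
    exact ⟨e, he.symm⟩
  have hRTGsym : ∀ {a b : (G.extend e1 e2).V},
      Relation.ReflTransGen (G.extend e1 e2).Adj a b →
      Relation.ReflTransGen (G.extend e1 e2).Adj b a :=
    fun h => (@Relation.ReflTransGen.stdSymm _ _ ⟨hsym⟩).symm _ _ h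
  have step1A : ∀ x : G.V, G.fst e1 = some x →
      (G.extend e1 e2).Adj (Sum.inl x) (Sum.inr 0) := by
    intro x hx
    refine ⟨Sum.inl e1, Or.inl ⟨?_, ?_⟩⟩
    · rw [extend_fst_inl, hx]; rfl
    · rw [extend_snd_inl, if_pos rfl]; rfl
  have step1B : ∀ y : G.V, G.snd e1 = some y →
      (G.extend e1 e2).Adj (Sum.inr 0) (Sum.inl y) := by
    intro y hy
    refine ⟨Sum.inr 0, Or.inl ⟨?_, ?_⟩⟩
    · rw [extend_fst_inr, if_pos rfl]; rfl
    · rw [extend_snd_inr, if_pos rfl, hy]; rfl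
  have step2A : ∀ x : G.V, G.fst e2 = some x →
      (G.extend e1 e2).Adj (Sum.inl x) (Sum.inr 1) := by
    intro x hx
    refine ⟨Sum.inl e2, Or.inl ⟨?_, ?_⟩⟩
    · rw [extend_fst_inl, hx]; rfl
    · rw [extend_snd_inl, if_neg (Ne.symm h12), if_pos rfl]; rfl
  have step2B : ∀ y : G.V, G.snd e2 = some y →
      (G.extend e1 e2).Adj (Sum.inr 1) (Sum.inl y) := by
    intro y hy
    refine ⟨Sum.inr 1, Or.inl ⟨?_, ?_⟩⟩
    · rw [extend_fst_inr, if_neg (by decide), if_pos rfl]; rfl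
    · rw [extend_snd_inr, if_neg (by decide), if_pos rfl, hy]; rfl
  have lift : ∀ x y : G.V, G.Adj x y →
      Relation.ReflTransGen (G.extend e1 e2).Adj (Sum.inl x) (Sum.inl y) := by
    rintro x y ⟨e, he⟩
    by_cases h1 : e = e1
    · subst h1
      rcases he with ⟨hf, hs2⟩ | ⟨hf, hs2⟩
      · exact Relation.ReflTransGen.trans (Relation.ReflTransGen.single (step1A x hf))
          (Relation.ReflTransGen.single (step1B y hs2))
      · exact hRTGsym (Relation.ReflTransGen.trans
          (Relation.ReflTransGen.single (step1A y hf))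
          (Relation.ReflTransGen.single (step1B x hs2)))
    · by_cases h2 : e = e2
      · subst h2
        rcases he with ⟨hf, hs2⟩ | ⟨hf, hs2⟩
        · exact Relation.ReflTransGen.trans (Relation.ReflTransGen.single (step2A x hf))
            (Relation.ReflTransGen.single (step2B y hs2))
        · exact hRTGsym (Relation.ReflTransGen.trans
            (Relation.ReflTransGen.single (step2A y hf))
            (Relation.ReflTransGen.single (step2B x hs2)))
      · refine Relation.ReflTransGen.single ⟨Sum.inl e, ?_⟩
        rcases he with ⟨hf, hs2⟩ | ⟨hf, hs2⟩
        · refine Or.inl ⟨?_, ?_⟩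
          · rw [extend_fst_inl, hf]; rfl
          · rw [extend_snd_inl, if_neg h1, if_neg h2, hs2]; rfl
        · refine Or.inr ⟨?_, ?_⟩
          · rw [extend_fst_inl, hf]; rfl
          · rw [extend_snd_inl, if_neg h1, if_neg h2, hs2]; rfl
  have liftRTG : ∀ x y : G.V, Relation.ReflTransGen G.Adj x y →
      Relation.ReflTransGen (G.extend e1 e2).Adj (Sum.inl x) (Sum.inl y) := by
    intro x y h
    induction h with
    | refl => exact Relation.ReflTransGen.refl
    | tail _ h2 ih => exact ih.trans (lift _ _ h2)
  have reach : ∀ z : (G.extend e1 e2).V, ∃ x : G.V,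
      Relation.ReflTransGen (G.extend e1 e2).Adj z (Sum.inl x) := by
    rintro (x | w)
    · exact ⟨x, Relation.ReflTransGen.refl⟩
    · obtain rfl | rfl := fin2_eq w
      · obtain ⟨y, hy⟩ : ∃ y, G.snd e1 = some y := by
          cases h : G.snd e1 with
          | none => exact absurd h (hcl e1 false)
          | some y => exact ⟨y, rfl⟩
        exact ⟨y, Relation.ReflTransGen.single (step1B y hy)⟩
      · obtain ⟨y, hy⟩ : ∃ y, G.snd e2 = some y := by
          cases h : G.snd e2 with
          | none => exact absurd h (hcl e2 false)
          | some y => exact ⟨y, rfl⟩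
        exact ⟨y, Relation.ReflTransGen.single (step2B y hy)⟩
  intro a b
  obtain ⟨x, hx⟩ := reach a
  obtain ⟨y, hy⟩ := reach b
  exact (hx.trans (liftRTG x y (hconn x y))).trans (hRTGsym hy)

end Multipole
end T4

section T5
open Finset
namespace Multipole

lemma delPair_colourable_of_extend (G : Multipole) (e1 e2 : G.E)
    (h : (G.extend e1 e2).Colourable) : (G.delPair e1 e2).Colourable := by
  obtain ⟨ψ, hψ0, hψinj⟩ := h
  refine ⟨fun e => ψ (Sum.inl e.1), fun e => hψ0 _, ?_⟩
  have lift : ∀ r : (G.delPair e1 e2).E × Bool, ∀ v,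
      (G.delPair e1 e2).endAt r.1 r.2 = some v →
      (G.extend e1 e2).endAt (Sum.inl r.1.1) r.2 = some (Sum.inl v) := by
    rintro ⟨⟨f, hf1, hf2⟩, b⟩ v hr
    rw [delPair_endAt] at hr
    cases b
    · erw [endAt_false] at hr ⊢
      rw [extend_snd_inl, if_neg hf1, if_neg hf2, hr]; rfl
    · erw [endAt_true] at hr ⊢
      rw [extend_fst_inl, hr]; rfl
  rintro v ⟨⟨pf, hpf1, hpf2⟩, pb⟩ ⟨⟨qf, hqf1, hqf2⟩, qb⟩ hp hq hne
  refine hψinj (Sum.inl v) (Sum.inl pf, pb) (Sum.inl qf, qb)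
    (lift ⟨⟨pf, hpf1, hpf2⟩, pb⟩ v hp) (lift ⟨⟨qf, hqf1, hqf2⟩, qb⟩ v hq) ?_
  intro hEq
  apply hne
  have h1 : pf = qf := Sum.inl.inj (congrArg Prod.fst hEq)
  have h2 : pb = qb := congrArg Prod.snd hEq
  subst h1; subst h2; rfl

lemma extend_colourable_of_delPair (G : Multipole) (hG : G.IsSnark) (e1 e2 : G.E)
    (h12 : e1 ≠ e2) (h : (G.delPair e1 e2).Colourable) :
    (G.extend e1 e2).Colourable := by
  obtain ⟨hcub, hcl, hconn, hncol⟩ := hG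
  obtain ⟨A, hA0, hAinj, hAsame⟩ := exists_assignment G hcub hcl e1 e2 h
  have hsum := assignment_sum G hcub hcl A hA0 hAinj
  rw [assignment_split G e1 e2 h12 A hAsame] at hsum
  have hpair : A (e1, true) + A (e1, false) = A (e2, true) + A (e2, false) :=
    (klein_add_eq_zero_iff _ _).mp hsum
  by_cases hk0 : A (e1, true) + A (e1, false) = 0
  · exfalso
    apply hncol
    have hc1 : A (e1, true) = A (e1, false) := (klein_add_eq_zero_iff _ _).mp hk0
    have hc2 : A (e2, true) = A (e2, false) :=
      (klein_add_eq_zero_iff _ _).mp (hpair ▸ hk0)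
    refine ⟨fun f => A (f, true), fun f => hA0 _, ?_⟩
    intro v p q hp hq hne
    have key : ∀ f b, A (f, true) = A (f, b) := by
      intro f b
      cases b
      · by_cases h1 : f = e1
        · subst h1; exact hc1
        · by_cases h2 : f = e2
          · subst h2; exact hc2
          · exact (hAsame f false h1 h2).symm
      · rfl
    show A (p.1, true) ≠ A (q.1, true)
    rw [key p.1 p.2, key q.1 q.2]
    exact hAinj v p q hp hq hne
  · obtain ⟨hab1, hak1, hbk1⟩ := klein_triple (A (e1, true)) (A (e1, false))
      (A (e1, true) + A (e1, false)) (hA0 _) (hA0 _) rfl hk0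
    obtain ⟨hab2, hak2, hbk2⟩ := klein_triple (A (e2, true)) (A (e2, false))
      (A (e1, true) + A (e1, false)) (hA0 _) (hA0 _) hpair.symm hk0
    refine ⟨Sum.elim (fun f => A (f, true))
      (fun i : Fin 3 => if i = 0 then A (e1, false) else if i = 1 then A (e2, false)
        else A (e1, true) + A (e1, false)), ?_, ?_⟩
    · rintro (f | i)
      · exact hA0 _
      · obtain rfl | rfl | rfl := fin3_eq i
        · exact hA0 (e1, false)
        · exact hA0 (e2, false)
        · exact hk0
    · rintro (x | w) p q hp hq hne
      · erw [extend_end_inl] at hp hq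
        rcases hp with ⟨f, rfl, hf⟩ | ⟨f, rfl, hf1, hf2, hf⟩ | ⟨rfl, hf⟩ | ⟨rfl, hf⟩ <;>
          rcases hq with ⟨g, rfl, hg⟩ | ⟨g, rfl, hg1, hg2, hg⟩ | ⟨rfl, hg⟩ | ⟨rfl, hg⟩
        · exact hAinj x (f, true) (g, true) (by rw [endAt_true]; exact hf)
            (by rw [endAt_true]; exact hg)
            (by intro hEq; injection hEq with h1 h2; subst h1; exact hne rfl)
        · show A (f, true) ≠ A (g, true)
          rw [← hAsame g false hg1 hg2]
          exact hAinj x (f, true) (g, false) (by rw [endAt_true]; exact hf)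
            (by rw [endAt_false]; exact hg) (by simp)
        · exact hAinj x (f, true) (e1, false) (by rw [endAt_true]; exact hf)
            (by rw [endAt_false]; exact hg) (by simp)
        · exact hAinj x (f, true) (e2, false) (by rw [endAt_true]; exact hf)
            (by rw [endAt_false]; exact hg) (by simp)
        · show A (f, true) ≠ A (g, true)
          rw [← hAsame f false hf1 hf2]
          exact hAinj x (f, false) (g, true) (by rw [endAt_false]; exact hf)
            (by rw [endAt_true]; exact hg) (by simp)
        · show A (f, true) ≠ A (g, true)
          rw [← hAsame f false hf1 hf2, ← hAsame g false hg1 hg2]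
          exact hAinj x (f, false) (g, false) (by rw [endAt_false]; exact hf)
            (by rw [endAt_false]; exact hg)
            (by intro hEq; injection hEq with h1 h2; subst h1; exact hne rfl)
        · show A (f, true) ≠ A (e1, false)
          rw [← hAsame f false hf1 hf2]
          exact hAinj x (f, false) (e1, false) (by rw [endAt_false]; exact hf)
            (by rw [endAt_false]; exact hg) (by simp [hf1])
        · show A (f, true) ≠ A (e2, false)
          rw [← hAsame f false hf1 hf2]
          exact hAinj x (f, false) (e2, false) (by rw [endAt_false]; exact hf)
            (by rw [endAt_false]; exact hg) (by simp [hf2])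
        · exact hAinj x (e1, false) (g, true) (by rw [endAt_false]; exact hf)
            (by rw [endAt_true]; exact hg) (by simp)
        · show A (e1, false) ≠ A (g, true)
          rw [← hAsame g false hg1 hg2]
          exact hAinj x (e1, false) (g, false) (by rw [endAt_false]; exact hf)
            (by rw [endAt_false]; exact hg) (by simp [Ne.symm hg1])
        · exact absurd rfl hne
        · exact hAinj x (e1, false) (e2, false) (by rw [endAt_false]; exact hf)
            (by rw [endAt_false]; exact hg) (by simp [h12])
        · exact hAinj x (e2, false) (g, true) (by rw [endAt_false]; exact hf)
            (by rw [endAt_true]; exact hg) (by simp)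
        · show A (e2, false) ≠ A (g, true)
          rw [← hAsame g false hg1 hg2]
          exact hAinj x (e2, false) (g, false) (by rw [endAt_false]; exact hf)
            (by rw [endAt_false]; exact hg) (by simp [Ne.symm hg2])
        · exact hAinj x (e2, false) (e1, false) (by rw [endAt_false]; exact hf)
            (by rw [endAt_false]; exact hg) (by simp [Ne.symm h12])
        · exact absurd rfl hne
      · obtain rfl | rfl := fin2_eq w
        · erw [extend_end_inr0] at hp hq
          rcases hp with rfl | rfl | rfl <;> rcases hq with rfl | rfl | rfl
          · exact absurd rfl hne
          · exact hab1
          · exact hak1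
          · exact hab1.symm
          · exact absurd rfl hne
          · exact hbk1
          · exact hak1.symm
          · exact hbk1.symm
          · exact absurd rfl hne
        · erw [extend_end_inr1 G e1 e2 h12] at hp hq
          rcases hp with rfl | rfl | rfl <;> rcases hq with rfl | rfl | rfl
          · exact absurd rfl hne
          · exact hab2
          · exact hak2
          · exact hab2.symm
          · exact absurd rfl hne
          · exact hbk2
          · exact hak2.symm
          · exact hbk2.symm
          · exact absurd rfl hne

end Multipole
end T5

/-- Let `G` be a snark and `e₁ ≠ e₂` two of its edges.  The I-extension
`G(e₁,e₂)` — subdivide `e₁` and `e₂` each with a new vertex and join the two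
new vertices by a new edge — is a snark if and only if the pair `{e₁,e₂}` is
removable, i.e. `G − {e₁,e₂}` is not 3-edge-colourable. -/
theorem extension_snark_iff_removable (G : Multipole) (hG : G.IsSnark)
    (e1 e2 : G.E) (h12 : e1 ≠ e2) :
    (G.extend e1 e2).IsSnark ↔ ¬ (G.delPair e1 e2).Colourable := by
  constructor
  · intro hs hcol
    exact hs.2.2.2 (Multipole.extend_colourable_of_delPair G hG e1 e2 h12 hcol)
  · intro hncol
    obtain ⟨hcub, hcl, hconn, _⟩ := hG
    refine ⟨Multipole.extend_cubic G hcub e1 e2 h12, Multipole.extend_closed G hcl e1 e2,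
      Multipole.extend_conn G hcl hconn e1 e2 h12, ?_⟩
    intro hc
    exact hncol (Multipole.delPair_colourable_of_extend G e1 e2 hc)
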